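/- For every fixed μ > 0, the map x ↦ p_μ(x) is continuous on ℝ^n. -/

import Mathlib

set_option maxHeartbeats 1000000

open Filter Metric Set Topology

private lemma aux_mid_norm_sq {E : Type*} [NormedAddCommGroup E] [InnerProductSpace ℝ E]
    (a b x : E) :
    ‖(1/2:ℝ)•a + (1/2:ℝ)•b - x‖^2
      = 1/2*‖a-x‖^2 + 1/2*‖b-x‖^2 - 1/4*‖a-b‖^2 := by
  have h : (1/2:ℝ)•a + (1/2:ℝ)•b - x = (1/2:ℝ)•(a-x) + (1/2:ℝ)•(b-x) := by module
  have hab : a - b = (a-x) - (b-x) := by abel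
  rw [h, hab]
  have e1 := norm_add_sq_real ((1/2:ℝ)•(a-x)) ((1/2:ℝ)•(b-x))
  have e2 := norm_sub_sq_real (a-x) (b-x)
  have s1 : ‖(1/2:ℝ)•(a-x)‖ = 1/2*‖a-x‖ := by rw [norm_smul]; simp
  have s2 : ‖(1/2:ℝ)•(b-x)‖ = 1/2*‖b-x‖ := by rw [norm_smul]; simp
  have i1 : inner ℝ ((1/2:ℝ)•(a-x)) ((1/2:ℝ)•(b-x)) = (1/4:ℝ) * inner ℝ (a-x) (b-x) := by
    rw [real_inner_smul_left, real_inner_smul_right]; ring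
  rw [e1, e2, s1, s2, i1] at *
  ring

private lemma aux_conv_lower {m : ℕ} (g : EuclideanSpace ℝ (Fin m) → ℝ)
    (hg : ConvexOn ℝ Set.univ g) (hgc : Continuous g) :
    ∃ C : ℝ, 0 ≤ C ∧ ∀ y, -C * (1 + ‖y‖) ≤ g y := by
  obtain ⟨C₀, hC₀⟩ := (isCompact_closedBall (0 : EuclideanSpace ℝ (Fin m)) 1).exists_bound_of_continuousOn hgc.continuousOn
  set C₁ := max C₀ 0 with hC₁
  have hC₁0 : 0 ≤ C₁ := le_max_right _ _
  have hb : ∀ y : EuclideanSpace ℝ (Fin m), ‖y‖ ≤ 1 → |g y| ≤ C₁ := by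
    intro y hy
    exact le_trans (hC₀ y (by simpa [Metric.mem_closedBall, dist_eq_norm] using hy)) (le_max_left _ _)
  refine ⟨2 * C₁, by linarith, fun y => ?_⟩
  by_cases hy : ‖y‖ ≤ 1
  · have := abs_le.mp (hb y hy)
    have h0 : (0:ℝ) ≤ ‖y‖ := norm_nonneg _
    nlinarith
  · push_neg at hy
    set t := ‖y‖ with ht
    have ht1 : 1 < t := hy
    have ht0 : 0 < t := by linarith
    have hu : ‖(t⁻¹ : ℝ) • y‖ = 1 := by
      rw [norm_smul, Real.norm_eq_abs, abs_of_pos (inv_pos.mpr ht0)]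
      field_simp
      exact ht.symm
    have hcv := hg.2 (Set.mem_univ y) (Set.mem_univ (0 : EuclideanSpace ℝ (Fin m)))
      (by positivity : (0:ℝ) ≤ t⁻¹) (by nlinarith [inv_lt_one_of_one_lt₀ ht1] : (0:ℝ) ≤ 1 - t⁻¹)
      (by ring)
    simp only [smul_zero, add_zero] at hcv
    have hgu := abs_le.mp (hb _ hu.le)
    have hg0 := abs_le.mp (hb 0 (by simp))
    have hmul : t * g (t⁻¹ • y) ≤ g y + (t - 1) * g 0 := by
      simp only [smul_eq_mul] at hcv
      have := mul_le_mul_of_nonneg_left hcv ht0.le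
      have hinv : t * t⁻¹ = 1 := mul_inv_cancel₀ ht0.ne'
      have hexp : t * (t⁻¹ * g y + (1 - t⁻¹) * g 0) = (t * t⁻¹) * g y + (t - t * t⁻¹) * g 0 := by ring
      rw [hexp, hinv] at this
      linarith
    nlinarith

/-- For every fixed `μ > 0`, the map `x ↦ p_μ(x)` is continuous on `ℝ^n`. -/
theorem stmt_9 {n m : ℕ}
    (F : EuclideanSpace ℝ (Fin n) → EuclideanSpace ℝ (Fin m))
    (g : EuclideanSpace ℝ (Fin m) → ℝ)
    (D : Set (EuclideanSpace ℝ (Fin n)))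
    (hF : ContDiff ℝ 2 F)
    (hg : ConvexOn ℝ Set.univ g) (hgc : Continuous g)
    (hDne : D.Nonempty) (hDcl : IsClosed D) (hDcv : Convex ℝ D)
    (p : ℝ → EuclideanSpace ℝ (Fin n) → EuclideanSpace ℝ (Fin n))
    (hp : ∀ μ, 0 < μ → ∀ x, p μ x ∈ D ∧ ∀ z ∈ D,
      g (F x + fderiv ℝ F x (p μ x - x)) + μ / 2 * ‖p μ x - x‖ ^ 2 ≤
      g (F x + fderiv ℝ F x (z - x)) + μ / 2 * ‖z - x‖ ^ 2)
    (μ : ℝ) (hμ : 0 < μ) :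
    Continuous (p μ) := by
  have hFc : Continuous F := hF.continuous
  have hAc : Continuous (fun x => fderiv ℝ F x) := hF.continuous_fderiv (by norm_num)
  set φ : EuclideanSpace ℝ (Fin n) → EuclideanSpace ℝ (Fin n) → ℝ :=
    fun x z => g (F x + fderiv ℝ F x (z - x)) + μ / 2 * ‖z - x‖ ^ 2 with hφ
  have hmem : ∀ x, p μ x ∈ D := fun x => (hp μ hμ x).1
  have hmin : ∀ x, ∀ z ∈ D, φ x (p μ x) ≤ φ x z := fun x z hz => (hp μ hμ x).2 z hz
  -- strong convexity inequality
  have hstrong : ∀ x, ∀ z ∈ D, φ x (p μ x) + μ/4 * ‖z - p μ x‖^2 ≤ φ x z := by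
    intro x z hz
    set q := p μ x with hq
    have hmidD : (1/2:ℝ)•q + (1/2:ℝ)•z ∈ D :=
      hDcv (hmem x) hz (by norm_num) (by norm_num) (by norm_num)
    have h1 : φ x q ≤ φ x ((1/2:ℝ)•q + (1/2:ℝ)•z) := hmin x _ hmidD
    have harg : F x + fderiv ℝ F x (((1/2:ℝ)•q + (1/2:ℝ)•z) - x)
        = (1/2:ℝ)•(F x + fderiv ℝ F x (q-x)) + (1/2:ℝ)•(F x + fderiv ℝ F x (z-x)) := by
      have hmx : ((1/2:ℝ)•q + (1/2:ℝ)•z) - x = (1/2:ℝ)•(q-x) + (1/2:ℝ)•(z-x) := by module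
      rw [hmx, map_add, map_smul, map_smul]
      module
    have gconv : g (F x + fderiv ℝ F x (((1/2:ℝ)•q + (1/2:ℝ)•z) - x))
        ≤ 1/2 * g (F x + fderiv ℝ F x (q-x)) + 1/2 * g (F x + fderiv ℝ F x (z-x)) := by
      rw [harg]
      have := hg.2 (Set.mem_univ (F x + fderiv ℝ F x (q-x)))
        (Set.mem_univ (F x + fderiv ℝ F x (z-x)))
        (by norm_num : (0:ℝ) ≤ 1/2) (by norm_num : (0:ℝ) ≤ 1/2) (by norm_num)
      simpa [smul_eq_mul] using this
    have hnorm := aux_mid_norm_sq q z x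
    have hzq : ‖z - q‖ = ‖q - z‖ := norm_sub_rev _ _
    simp only [hφ] at h1 gconv ⊢
    rw [hnorm] at h1
    rw [hzq]
    nlinarith [sq_nonneg ‖q - z‖]
  -- two-point estimate
  have hkey : ∀ x y, μ/4 * ‖p μ y - p μ x‖^2
      ≤ (φ y (p μ x) - φ x (p μ x)) + (φ x (p μ y) - φ y (p μ y)) := by
    intro x y
    have h1 := hstrong y (p μ x) (hmem x)
    have h2 := hmin x (p μ y) (hmem y)
    have : ‖p μ x - p μ y‖ = ‖p μ y - p μ x‖ := norm_sub_rev _ _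
    rw [this] at h1
    clear_value φ
    linarith
  -- continuity of φ in first variable
  have hφcont : ∀ z, Continuous (fun x => φ x z) := by
    intro z
    simp only [hφ]
    apply Continuous.add
    · exact hgc.comp (hFc.add (hAc.clm_apply (continuous_const.sub continuous_id)))
    · exact continuous_const.mul ((continuous_const.sub continuous_id).norm.pow 2)
  obtain ⟨C, hC0, hCg⟩ := aux_conv_lower g hg hgc
  -- sequential continuity
  rw [continuous_iff_seqContinuous]
  intro xs x₀ hxs
  set p₀ := p μ x₀ with hp₀
  set zk := fun k => p μ (xs k) with hzk
  -- basic eventual bounds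
  have hx1 : ∀ᶠ k in atTop, ‖xs k‖ ≤ ‖x₀‖ + 1 :=
    (hxs.norm.eventually_le_const (by linarith [norm_nonneg x₀] : ‖x₀‖ < ‖x₀‖ + 1))
  have hF1 : ∀ᶠ k in atTop, ‖F (xs k)‖ ≤ ‖F x₀‖ + 1 :=
    (((hFc.tendsto x₀).comp hxs).norm.eventually_le_const (by linarith [norm_nonneg (F x₀)]))
  have hA1 : ∀ᶠ k in atTop, ‖fderiv ℝ F (xs k)‖ ≤ ‖fderiv ℝ F x₀‖ + 1 :=
    (((hAc.tendsto x₀).comp hxs).norm.eventually_le_const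
      (by linarith [norm_nonneg (fderiv ℝ F x₀)]))
  have hctend : Tendsto (fun k => φ (xs k) p₀ - φ x₀ p₀) atTop (𝓝 0) := by
    have := ((hφcont p₀).tendsto x₀).comp hxs
    simpa using this.sub_const (φ x₀ p₀)
  have hc1 : ∀ᶠ k in atTop, φ (xs k) p₀ - φ x₀ p₀ ≤ 1 :=
    hctend.eventually_le_const (by norm_num)
  -- boundedness of zk
  set RA := ‖fderiv ℝ F x₀‖ + 1 with hRA
  set RF := ‖F x₀‖ + 1 with hRF
  set Rx := ‖x₀‖ + 1 with hRx
  set B := |φ x₀ p₀ + 1| + C * (1 + RF) with hB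
  set K := C * RA with hK
  have hB0 : 0 ≤ B := by
    have : (0:ℝ) ≤ C * (1 + RF) := by
      apply mul_nonneg hC0; positivity
    positivity
  have hK0 : 0 ≤ K := mul_nonneg hC0 (by positivity)
  set T := 2*(B+K)/μ + 1 with hT
  have htbd : ∀ᶠ k in atTop, ‖zk k - xs k‖ ≤ T := by
    filter_upwards [hF1, hA1, hc1] with k hFk hAk hck
    set t := ‖zk k - xs k‖ with ht
    have ht0 : 0 ≤ t := norm_nonneg _
    have hle : φ (xs k) (zk k) ≤ φ x₀ p₀ + 1 := by
      have := hmin (xs k) p₀ (hmem x₀)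
      linarith
    have hvb : ‖F (xs k) + fderiv ℝ F (xs k) (zk k - xs k)‖ ≤ RF + RA * t := by
      calc ‖F (xs k) + fderiv ℝ F (xs k) (zk k - xs k)‖
          ≤ ‖F (xs k)‖ + ‖fderiv ℝ F (xs k) (zk k - xs k)‖ := norm_add_le _ _
        _ ≤ RF + RA * t := by
            have h1 := (fderiv ℝ F (xs k)).le_opNorm (zk k - xs k)
            have h2 : ‖fderiv ℝ F (xs k)‖ * ‖zk k - xs k‖ ≤ RA * t := by
              apply mul_le_mul hAk le_rfl ht0 (by positivity)
            linarith
    have hglow : -C * (1 + (RF + RA * t)) ≤ g (F (xs k) + fderiv ℝ F (xs k) (zk k - xs k)) := by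
      have h1 := hCg (F (xs k) + fderiv ℝ F (xs k) (zk k - xs k))
      have h2 : -C * (1 + (RF + RA * t)) ≤ -C * (1 + ‖F (xs k) + fderiv ℝ F (xs k) (zk k - xs k)‖) := by
        nlinarith
      linarith
    have hquad : μ/2 * t^2 ≤ B + K * t := by
      have hφval : φ (xs k) (zk k)
          = g (F (xs k) + fderiv ℝ F (xs k) (zk k - xs k)) + μ/2 * t^2 := rfl
      have habs : φ x₀ p₀ + 1 ≤ |φ x₀ p₀ + 1| := le_abs_self _
      rw [hφval] at hle
      simp only [hB, hK]
      clear_value t zk p₀ RA RF B K φ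
      nlinarith [habs, hglow, hle]
    by_contra hcon
    push_neg at hcon
    rw [hT] at hcon
    have h1 : 1 < t := by
      have : 0 ≤ 2*(B+K)/μ := by positivity
      linarith
    have h2' : 2*(B+K)/μ < t := by linarith
    have h2 := (div_lt_iff₀ hμ).mp h2'
    clear_value t zk p₀ RA RF B K T φ
    nlinarith [mul_lt_mul_of_pos_right h2 (by linarith : (0:ℝ) < t), hB0, hK0, h1, hquad]
  set R := T + Rx with hR
  have hzbd : ∀ᶠ k in atTop, ‖zk k‖ ≤ R := by
    filter_upwards [htbd, hx1] with k h1 h2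
    have h3 : ‖zk k‖ ≤ ‖zk k - xs k‖ + ‖xs k‖ := by
      simpa using norm_add_le (zk k - xs k) (xs k)
    rw [hR]; linarith
  -- Lipschitz bound for g on a big ball
  set ρ := max (‖F x₀‖ + ‖fderiv ℝ F x₀‖ * (R + ‖x₀‖)) (RF + RA * (R + Rx)) + 1 with hρ
  obtain ⟨K₂, hK₂⟩ : ∃ K₂ : NNReal, LipschitzOnWith K₂ g (ball (0:EuclideanSpace ℝ (Fin m)) ρ) := by
    apply ConvexOn.exists_lipschitzOnWith_of_isBounded
      (hg.subset (Set.subset_univ _) (convex_ball _ _)) (lt_add_one ρ)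
    apply Bornology.IsBounded.subset
    · exact ((isCompact_closedBall (0:EuclideanSpace ℝ (Fin m)) (ρ+1)).image_of_continuousOn
        hgc.continuousOn).isBounded
    · exact Set.image_mono ball_subset_closedBall
  -- convergence pieces
  have hFt : Tendsto (fun k => ‖F x₀ - F (xs k)‖) atTop (𝓝 0) := by
    have h := (hFc.tendsto x₀).comp hxs
    have h2 := (tendsto_const_nhds (x := F x₀) (f := atTop)).sub h
    simpa using h2.norm
  have hAt : Tendsto (fun k => ‖fderiv ℝ F x₀ - fderiv ℝ F (xs k)‖) atTop (𝓝 0) := by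
    have h := (hAc.tendsto x₀).comp hxs
    have h2 := (tendsto_const_nhds (x := fderiv ℝ F x₀) (f := atTop)).sub h
    simpa using h2.norm
  have hAxt : Tendsto (fun k => ‖fderiv ℝ F (xs k) (xs k) - fderiv ℝ F x₀ x₀‖) atTop (𝓝 0) := by
    have hcont : Continuous (fun x => fderiv ℝ F x x) := hAc.clm_apply continuous_id
    have h := (hcont.tendsto x₀).comp hxs
    simpa using (h.sub (tendsto_const_nhds (x := fderiv ℝ F x₀ x₀))).norm
  have hxt : Tendsto (fun k => ‖xs k - x₀‖) atTop (𝓝 0) := by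
    simpa using (hxs.sub (tendsto_const_nhds (x := x₀))).norm
  set Cq := μ/2 * (2*R + ‖x₀‖ + Rx) with hCq
  set b := fun k => (K₂:ℝ) * (‖F x₀ - F (xs k)‖ + ‖fderiv ℝ F x₀ - fderiv ℝ F (xs k)‖ * R
      + ‖fderiv ℝ F (xs k) (xs k) - fderiv ℝ F x₀ x₀‖) + Cq * ‖xs k - x₀‖ with hbdef
  have hbt : Tendsto b atTop (𝓝 0) := by
    have h : Tendsto (fun k => (K₂:ℝ) * (‖F x₀ - F (xs k)‖
        + ‖fderiv ℝ F x₀ - fderiv ℝ F (xs k)‖ * R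
        + ‖fderiv ℝ F (xs k) (xs k) - fderiv ℝ F x₀ x₀‖) + Cq * ‖xs k - x₀‖) atTop
        (𝓝 ((K₂:ℝ) * (0 + 0 * R + 0) + Cq * 0)) :=
      (Tendsto.const_mul _ ((hFt.add (hAt.mul_const R)).add hAxt)).add (Tendsto.const_mul _ hxt)
    rw [hbdef]
    convert h using 2
    ring
  -- eventual bound on the difference of objectives at zk
  have hGb : ∀ᶠ k in atTop, φ x₀ (zk k) - φ (xs k) (zk k) ≤ b k := by
    filter_upwards [hzbd, hx1, hF1, hA1] with k hzR hx1k hFk hAk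
    set u := F x₀ + fderiv ℝ F x₀ (zk k - x₀) with hu
    set v := F (xs k) + fderiv ℝ F (xs k) (zk k - xs k) with hv
    have hz1 : ‖zk k - x₀‖ ≤ R + ‖x₀‖ := by
      have := norm_sub_le (zk k) x₀; linarith
    have hz2 : ‖zk k - xs k‖ ≤ R + Rx := by
      have := norm_sub_le (zk k) (xs k); linarith
    have hub : ‖u‖ < ρ := by
      have h1 : ‖u‖ ≤ ‖F x₀‖ + ‖fderiv ℝ F x₀‖ * ‖zk k - x₀‖ := by
        refine (norm_add_le _ _).trans ?_
        have := (fderiv ℝ F x₀).le_opNorm (zk k - x₀)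
        linarith
      have h2 : ‖fderiv ℝ F x₀‖ * ‖zk k - x₀‖ ≤ ‖fderiv ℝ F x₀‖ * (R + ‖x₀‖) :=
        mul_le_mul_of_nonneg_left hz1 (norm_nonneg _)
      have h3 : ‖F x₀‖ + ‖fderiv ℝ F x₀‖ * (R + ‖x₀‖)
          ≤ max (‖F x₀‖ + ‖fderiv ℝ F x₀‖ * (R + ‖x₀‖)) (RF + RA * (R + Rx)) := le_max_left _ _
      rw [hρ]; linarith
    have hvb : ‖v‖ < ρ := by
      have h1 : ‖v‖ ≤ ‖F (xs k)‖ + ‖fderiv ℝ F (xs k)‖ * ‖zk k - xs k‖ := by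
        refine (norm_add_le _ _).trans ?_
        have := (fderiv ℝ F (xs k)).le_opNorm (zk k - xs k)
        linarith
      have h2 : ‖fderiv ℝ F (xs k)‖ * ‖zk k - xs k‖ ≤ RA * (R + Rx) := by
        apply mul_le_mul hAk hz2 (norm_nonneg _) (by rw [hRA]; positivity)
      have h3 : RF + RA * (R + Rx)
          ≤ max (‖F x₀‖ + ‖fderiv ℝ F x₀‖ * (R + ‖x₀‖)) (RF + RA * (R + Rx)) := le_max_right _ _
      rw [hρ]; linarith
    have hgd : g u - g v ≤ (K₂:ℝ) * ‖u - v‖ := by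
      have h := hK₂.dist_le_mul u (mem_ball_zero_iff.mpr hub) v (mem_ball_zero_iff.mpr hvb)
      rw [Real.dist_eq, dist_eq_norm] at h
      exact (le_abs_self _).trans h
    have huv : ‖u - v‖ ≤ ‖F x₀ - F (xs k)‖ + ‖fderiv ℝ F x₀ - fderiv ℝ F (xs k)‖ * R
        + ‖fderiv ℝ F (xs k) (xs k) - fderiv ℝ F x₀ x₀‖ := by
      have hdec : u - v = (F x₀ - F (xs k)) + (fderiv ℝ F x₀ - fderiv ℝ F (xs k)) (zk k)
          + (fderiv ℝ F (xs k) (xs k) - fderiv ℝ F x₀ x₀) := by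
        simp only [hu, hv, ContinuousLinearMap.sub_apply, map_sub]
        abel
      rw [hdec]
      have h1 := norm_add₃_le (E := EuclideanSpace ℝ (Fin m))
        (a := F x₀ - F (xs k)) (b := (fderiv ℝ F x₀ - fderiv ℝ F (xs k)) (zk k))
        (c := fderiv ℝ F (xs k) (xs k) - fderiv ℝ F x₀ x₀)
      have h2 : ‖(fderiv ℝ F x₀ - fderiv ℝ F (xs k)) (zk k)‖
          ≤ ‖fderiv ℝ F x₀ - fderiv ℝ F (xs k)‖ * R := by
        refine ((fderiv ℝ F x₀ - fderiv ℝ F (xs k)).le_opNorm (zk k)).trans ?_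
        exact mul_le_mul_of_nonneg_left hzR (norm_nonneg _)
      linarith
    have he : |‖zk k - x₀‖ - ‖zk k - xs k‖| ≤ ‖xs k - x₀‖ := by
      have h := abs_norm_sub_norm_le (zk k - x₀) (zk k - xs k)
      have h2 : (zk k - x₀) - (zk k - xs k) = xs k - x₀ := by abel
      rwa [h2] at h
    have hquadb : ‖zk k - x₀‖^2 - ‖zk k - xs k‖^2 ≤ ‖xs k - x₀‖ * (2*R + ‖x₀‖ + Rx) := by
      obtain ⟨he1, he2⟩ := abs_le.mp he
      nlinarith [norm_nonneg (zk k - x₀), norm_nonneg (zk k - xs k), norm_nonneg (xs k - x₀)]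
    have hφdiff : φ x₀ (zk k) - φ (xs k) (zk k)
        = (g u - g v) + μ/2 * (‖zk k - x₀‖^2 - ‖zk k - xs k‖^2) := by
      simp only [hφ, hu, hv]; ring
    have hKnn : (0:ℝ) ≤ (K₂:ℝ) := K₂.coe_nonneg
    rw [hφdiff, hbdef, hCq]
    have h5 : (K₂:ℝ) * ‖u - v‖ ≤ (K₂:ℝ) * (‖F x₀ - F (xs k)‖
        + ‖fderiv ℝ F x₀ - fderiv ℝ F (xs k)‖ * R
        + ‖fderiv ℝ F (xs k) (xs k) - fderiv ℝ F x₀ x₀‖) :=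
      mul_le_mul_of_nonneg_left huv hKnn
    have h6 : μ/2 * (‖zk k - x₀‖^2 - ‖zk k - xs k‖^2)
        ≤ μ/2 * (‖xs k - x₀‖ * (2*R + ‖x₀‖ + Rx)) :=
      mul_le_mul_of_nonneg_left hquadb (by positivity)
    have h7 : μ/2 * (‖xs k - x₀‖ * (2*R + ‖x₀‖ + Rx))
        = μ/2 * (2*R + ‖x₀‖ + Rx) * ‖xs k - x₀‖ := by ring
    clear_value u v φ zk p₀ Cq b R Rx RA RF B K T ρ
    linarith [hgd, h5, h6, h7.le, h7.ge]
  -- squeeze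
  have hckabs : Tendsto (fun k => |φ (xs k) p₀ - φ x₀ p₀|) atTop (𝓝 0) := by
    simpa using hctend.abs
  have hW : Tendsto (fun k => (4/μ) * (|φ (xs k) p₀ - φ x₀ p₀| + b k)) atTop (𝓝 0) := by
    simpa using (hckabs.add hbt).const_mul (4/μ)
  have hsq : Tendsto (fun k => ‖zk k - p₀‖^2) atTop (𝓝 0) := by
    apply squeeze_zero' (Filter.Eventually.of_forall fun k => sq_nonneg _) _ hW
    filter_upwards [hGb] with k hGk
    have hk : μ/4 * ‖zk k - p₀‖^2
        ≤ (φ (xs k) p₀ - φ x₀ p₀) + (φ x₀ (zk k) - φ (xs k) (zk k)) := hkey x₀ (xs k)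
    have hca := le_abs_self (φ (xs k) p₀ - φ x₀ p₀)
    have hmain : μ/4 * ‖zk k - p₀‖^2 ≤ |φ (xs k) p₀ - φ x₀ p₀| + b k := by
      clear_value φ zk p₀ b
      linarith
    have h4 : (0:ℝ) < 4/μ := by positivity
    calc ‖zk k - p₀‖^2 = (4/μ) * (μ/4 * ‖zk k - p₀‖^2) := by field_simp
      _ ≤ (4/μ) * (|φ (xs k) p₀ - φ x₀ p₀| + b k) := mul_le_mul_of_nonneg_left hmain h4.le
  have hnorm0 : Tendsto (fun k => ‖zk k - p₀‖) atTop (𝓝 0) := by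
    have h := (Real.continuous_sqrt.tendsto 0).comp hsq
    rw [show Real.sqrt 0 = 0 from Real.sqrt_zero] at h
    have heq : (fun x => Real.sqrt x) ∘ (fun k => ‖zk k - p₀‖^2) = fun k => ‖zk k - p₀‖ :=
      funext fun k => Real.sqrt_sq (norm_nonneg _)
    rwa [heq] at h
  have hfin : Tendsto (fun k => p μ (xs k)) atTop (𝓝 p₀) := by
    rw [tendsto_iff_norm_sub_tendsto_zero]
    exact hnorm0
  exact hfin
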